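/- arXiv:1708.00132 — 2 statements merged into one kernel-verified Lean document; each statement's English description precedes it below -/
import Mathlib

section
/- Let Z be an m × n real matrix of rank r, let ε ∈ (0,1), and let Π be a k × m real matrix with k ≥ r. Suppose that ‖Πu‖₂² ∈ [1−ε, 1+ε] for every left singular vector u of Z (i.e., every unit vector u in the column space of Z appearing in a singular value decomposition of Z). Then √((1−ε)/r) · ‖Z‖_s ≤ ‖ΠZ‖_s ≤ √(1+ε) · ‖Z‖_s. -/
set_option linter.unusedSectionVars false
set_option linter.unusedVariables false


open scoped BigOperators
open Matrix

noncomputable section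

/-- The Schatten-1 (nuclear) norm of a real matrix: the sum of its singular values,
realized as the square roots of the eigenvalues of `Aᴴ * A`. -/
def nuclearNorm {m n : Type*} [Fintype m] [Fintype n] [DecidableEq n]
    (A : Matrix m n ℝ) : ℝ :=
  ∑ j, Real.sqrt ((show (Aᵀ * A).IsHermitian by
    simpa using Matrix.isHermitian_conjTranspose_mul_self A).eigenvalues j)

/-- `u` is a left singular vector of `Z`: a unit vector which is an eigenvector of
`Z * Zᵀ` for a nonzero eigenvalue (equivalently, a unit eigenvector of `Z * Zᵀ`
lying in the column space of `Z`, i.e. appearing in a singular value decomposition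
of `Z` paired with a nonzero singular value). -/
def IsLeftSingularVector {m n : Type*} [Fintype m] [Fintype n]
    (Z : Matrix m n ℝ) (u : m → ℝ) : Prop :=
  (∑ i, u i ^ 2 = 1) ∧ ∃ μ : ℝ, μ ≠ 0 ∧ (Z * Zᵀ) *ᵥ u = μ • u

namespace NNAux

/-- Squared Frobenius norm. -/
def frobSq {a b : Type*} [Fintype a] [Fintype b] (M : Matrix a b ℝ) : ℝ :=
  ∑ i, ∑ j, M i j ^ 2

lemma frobSq_nonneg {a b : Type*} [Fintype a] [Fintype b] (M : Matrix a b ℝ) :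
    0 ≤ frobSq M := by
  refine Finset.sum_nonneg fun i _ => Finset.sum_nonneg fun j _ => sq_nonneg _

lemma frobSq_eq_trace {a b : Type*} [Fintype a] [Fintype b] (M : Matrix a b ℝ) :
    frobSq M = Matrix.trace (Mᵀ * M) := by
  unfold frobSq Matrix.trace
  simp only [Matrix.diag_apply, Matrix.mul_apply, Matrix.transpose_apply, sq]
  exact Finset.sum_comm

lemma trace_transpose_mul_self_nonneg {a b : Type*} [Fintype a] [Fintype b]
    (M : Matrix a b ℝ) : 0 ≤ Matrix.trace (Mᵀ * M) :=
  (frobSq_eq_trace M) ▸ frobSq_nonneg M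

/-- Cauchy–Schwarz with square roots. -/
lemma sum_mul_le_sqrt_mul_sqrt {ι : Type*} (s : Finset ι) (f g : ι → ℝ) :
    ∑ i ∈ s, f i * g i ≤
      Real.sqrt (∑ i ∈ s, f i ^ 2) * Real.sqrt (∑ i ∈ s, g i ^ 2) := by
  have h := Finset.sum_mul_sq_le_sq_mul_sq s f g
  calc ∑ i ∈ s, f i * g i ≤ |∑ i ∈ s, f i * g i| := le_abs_self _
    _ = Real.sqrt ((∑ i ∈ s, f i * g i) ^ 2) := (Real.sqrt_sq_eq_abs _).symm
    _ ≤ Real.sqrt ((∑ i ∈ s, f i ^ 2) * ∑ i ∈ s, g i ^ 2) := Real.sqrt_le_sqrt h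
    _ = _ := Real.sqrt_mul (Finset.sum_nonneg fun i _ => sq_nonneg _) _

lemma star_eq_transpose {a : Type*} [Fintype a] (U : Matrix a a ℝ) : star U = Uᵀ := by
  ext i j
  simp [Matrix.star_apply]

section SVD

variable {m n : Type*} [Fintype m] [Fintype n] [DecidableEq m] [DecidableEq n]
  (A : Matrix m n ℝ)

lemma hermT : (Aᵀ * A).IsHermitian := by
  simpa using Matrix.isHermitian_conjTranspose_mul_self A

/-- eigenvalues of `AᵀA` (squares of singular values of `A`). -/
def lam (j : n) : ℝ := (hermT A).eigenvalues j

/-- right singular vectors of `A`. -/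
def rv (j : n) : n → ℝ := ⇑((hermT A).eigenvectorBasis j)

lemma nuclearNorm_eq : nuclearNorm A = ∑ j, Real.sqrt (lam A j) := rfl

lemma lam_nonneg (j : n) : 0 ≤ lam A j :=
  Matrix.eigenvalues_conjTranspose_mul_self_nonneg A j

lemma nuclearNorm_nonneg : 0 ≤ nuclearNorm A := by
  rw [nuclearNorm_eq]
  exact Finset.sum_nonneg fun j _ => Real.sqrt_nonneg _

/-- the eigenvector unitary of `AᵀA`, as a plain matrix. -/
def Umat : Matrix n n ℝ :=
  ((hermT A).eigenvectorUnitary : Matrix n n ℝ)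

lemma Umat_apply (b j : n) : Umat A b j = rv A j b := rfl

lemma Umat_mul_transpose : Umat A * (Umat A)ᵀ = 1 := by
  rw [← star_eq_transpose]
  exact Unitary.coe_mul_star_self _

lemma transpose_mul_Umat : (Umat A)ᵀ * Umat A = 1 := by
  rw [← star_eq_transpose]
  exact Unitary.coe_star_mul_self _

lemma eig_mulVec (j : n) : (Aᵀ * A) *ᵥ rv A j = lam A j • rv A j := by
  have h := (hermT A).mulVec_eigenvectorBasis j
  rw [← Matrix.conjTranspose_eq_transpose_of_trivial A]
  exact h

lemma rv_dot (i j : n) : rv A i ⬝ᵥ rv A j = if i = j then 1 else 0 := by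
  have h := transpose_mul_Umat A
  have h2 := congrFun (congrFun h i) j
  simpa [Matrix.mul_apply, Matrix.one_apply, Matrix.transpose_apply, Umat_apply,
    dotProduct] using h2

lemma rv_complete (b c : n) : ∑ j, rv A j b * rv A j c = if b = c then 1 else 0 := by
  have h := Umat_mul_transpose A
  have h2 := congrFun (congrFun h b) c
  simpa [Matrix.mul_apply, Matrix.one_apply, Matrix.transpose_apply, Umat_apply] using h2

lemma mulVec_rv_dot (i j : n) :
    (A *ᵥ rv A i) ⬝ᵥ (A *ᵥ rv A j) = lam A j * (if i = j then 1 else 0) := by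
  calc (A *ᵥ rv A i) ⬝ᵥ (A *ᵥ rv A j)
      = (rv A i ᵥ* Aᵀ) ⬝ᵥ (A *ᵥ rv A j) := by rw [Matrix.vecMul_transpose]
    _ = rv A i ⬝ᵥ (Aᵀ *ᵥ (A *ᵥ rv A j)) := (Matrix.dotProduct_mulVec _ _ _).symm
    _ = rv A i ⬝ᵥ ((Aᵀ * A) *ᵥ rv A j) := by rw [Matrix.mulVec_mulVec]
    _ = rv A i ⬝ᵥ (lam A j • rv A j) := by rw [eig_mulVec]
    _ = lam A j * (rv A i ⬝ᵥ rv A j) := by rw [dotProduct_smul]; rfl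
    _ = _ := by rw [rv_dot]

lemma mulVec_rv_eq_zero {j : n} (hj : lam A j = 0) : A *ᵥ rv A j = 0 := by
  have h := mulVec_rv_dot A j j
  rw [if_pos rfl, hj, zero_mul] at h
  funext x
  have hsum : ∑ i, (A *ᵥ rv A j) i * (A *ᵥ rv A j) i = 0 := h
  have := (Finset.sum_eq_zero_iff_of_nonneg (fun i _ => mul_self_nonneg ((A *ᵥ rv A j) i))).1
    hsum x (Finset.mem_univ x)
  have := mul_self_eq_zero.1 this
  simpa using this

/-- Parseval-type identity: multiplying on the right by the orthogonal matrix `Umat`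
preserves the Frobenius norm. -/
lemma sum_mulVec_rv_sq {a : Type*} [Fintype a] (M : Matrix a n ℝ) :
    ∑ j, ∑ x, (M *ᵥ rv A j) x ^ 2 = frobSq M := by
  have key : ∀ j x, (M *ᵥ rv A j) x = (M * Umat A) x j := by
    intro j x
    simp [Matrix.mul_apply, Matrix.mulVec, dotProduct, Umat_apply]
  calc ∑ j, ∑ x, (M *ᵥ rv A j) x ^ 2 = ∑ j, ∑ x, ((M * Umat A) x j) ^ 2 := by
        simp_rw [key]
    _ = ∑ x, ∑ j, ((M * Umat A) x j) ^ 2 := Finset.sum_comm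
    _ = frobSq (M * Umat A) := rfl
    _ = Matrix.trace ((M * Umat A)ᵀ * (M * Umat A)) := frobSq_eq_trace _
    _ = Matrix.trace ((M * Umat A) * ((Umat A)ᵀ * Mᵀ)) := by
        rw [Matrix.transpose_mul, Matrix.trace_mul_comm, Matrix.mul_assoc]
    _ = Matrix.trace (M * Mᵀ) := by
        rw [show (M * Umat A) * ((Umat A)ᵀ * Mᵀ) = M * ((Umat A * (Umat A)ᵀ) * Mᵀ) by
          simp [Matrix.mul_assoc], Umat_mul_transpose, Matrix.one_mul]
    _ = Matrix.trace (Mᵀ * M) := Matrix.trace_mul_comm _ _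
    _ = frobSq M := (frobSq_eq_trace M).symm

lemma reconstruct {a : Type*} [Fintype a] (N : Matrix a n ℝ) (x : a) (b : n) :
    ∑ j, (N *ᵥ rv A j) x * rv A j b = N x b := by
  have h1 : (N * Umat A) * (Umat A)ᵀ = N := by
    rw [Matrix.mul_assoc, Umat_mul_transpose, Matrix.mul_one]
  have h2 := congrFun (congrFun h1 x) b
  calc ∑ j, (N *ᵥ rv A j) x * rv A j b
      = ((N * Umat A) * (Umat A)ᵀ) x b := by
        simp [Matrix.mul_apply, Matrix.mulVec, dotProduct, Umat_apply,
          Matrix.transpose_apply]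
    _ = N x b := h2

lemma sum_lam_eq_frobSq : ∑ j, lam A j = frobSq A := by
  have hG := hermT A
  have h1 : Matrix.trace (Aᵀ * A) =
      Matrix.trace (Matrix.diagonal (RCLike.ofReal ∘ hG.eigenvalues) : Matrix n n ℝ) := by
    conv_lhs => rw [hG.spectral_theorem, Unitary.conjStarAlgAut_apply]
    rw [Matrix.trace_mul_comm, ← Matrix.mul_assoc, Unitary.coe_star_mul_self, Matrix.one_mul]
  rw [frobSq_eq_trace, h1,
    Matrix.trace_diagonal]
  simp [lam, Function.comp]

lemma card_lam_ne_zero : Fintype.card {j // lam A j ≠ 0} = A.rank := by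
  have h := (hermT A).rank_eq_card_non_zero_eigs
  rw [Matrix.rank_transpose_mul_self] at h
  exact h.symm

lemma sqrt_frobSq_le_nuclearNorm : Real.sqrt (frobSq A) ≤ nuclearNorm A := by
  rw [nuclearNorm_eq, ← sum_lam_eq_frobSq]
  have h1 : ∑ j, lam A j = ∑ j, Real.sqrt (lam A j) ^ 2 :=
    Finset.sum_congr rfl fun j _ => (Real.sq_sqrt (lam_nonneg A j)).symm
  rw [h1]
  calc Real.sqrt (∑ j, Real.sqrt (lam A j) ^ 2)
      ≤ Real.sqrt ((∑ j, Real.sqrt (lam A j)) ^ 2) :=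
        Real.sqrt_le_sqrt (Finset.sum_sq_le_sq_sum_of_nonneg fun j _ => Real.sqrt_nonneg _)
    _ = ∑ j, Real.sqrt (lam A j) :=
        Real.sqrt_sq (Finset.sum_nonneg fun j _ => Real.sqrt_nonneg _)

end SVD

section Key

variable {k p n : Type*} [Fintype k] [Fintype p] [Fintype n]
  [DecidableEq k] [DecidableEq p] [DecidableEq n]

lemma nuclearNorm_mul_le (B : Matrix k p ℝ) (C : Matrix p n ℝ) :
    nuclearNorm (B * C) ≤ Real.sqrt (frobSq B) * Real.sqrt (frobSq C) := by
  set A : Matrix k n ℝ := B * C with hA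
  set w : n → k → ℝ :=
    fun j => if lam A j = 0 then 0 else (Real.sqrt (lam A j))⁻¹ • (A *ᵥ rv A j) with hw
  have hw_dot : ∀ i j, w i ⬝ᵥ w j = if i = j then (if lam A j = 0 then 0 else 1) else 0 := by
    intro i j
    by_cases hi : lam A i = 0
    · by_cases hij : i = j
      · subst hij; simp [hw, hi]
      · simp [hw, hi, hij]
    · by_cases hj : lam A j = 0
      · simp [hw, hi, hj]
      · simp only [hw, if_neg hi, if_neg hj, smul_dotProduct, dotProduct_smul,
          mulVec_rv_dot, smul_eq_mul]
        by_cases hij : i = j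
        · subst hij
          have hs : Real.sqrt (lam A i) * Real.sqrt (lam A i) = lam A i :=
            Real.mul_self_sqrt (lam_nonneg A i)
          have hsne : Real.sqrt (lam A i) ≠ 0 := by
            intro h0
            rw [h0, mul_zero] at hs
            exact hi hs.symm
          simp only [if_pos rfl]
          field_simp
          rw [sq, hs]
        · simp [hij]
  have hw_key : ∀ j, w j ⬝ᵥ (A *ᵥ rv A j) = Real.sqrt (lam A j) := by
    intro j
    by_cases hj : lam A j = 0
    · simp [hw, hj]
    · simp only [hw, if_neg hj, smul_dotProduct, mulVec_rv_dot, if_pos rfl,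
        mul_one, smul_eq_mul]
      have hs : Real.sqrt (lam A j) * Real.sqrt (lam A j) = lam A j :=
        Real.mul_self_sqrt (lam_nonneg A j)
      have hsne : Real.sqrt (lam A j) ≠ 0 := by
        intro h0
        rw [h0, mul_zero] at hs
        exact hj hs.symm
      field_simp
      rw [if_pos trivial, mul_one, sq, hs]
  have hsplit : ∀ j, w j ⬝ᵥ (A *ᵥ rv A j) = (Bᵀ *ᵥ w j) ⬝ᵥ (C *ᵥ rv A j) := by
    intro j
    conv_lhs => rw [hA, ← Matrix.mulVec_mulVec, Matrix.dotProduct_mulVec,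
      ← Matrix.mulVec_transpose]
  -- the matrix whose rows are the `w j`
  set W : Matrix n k ℝ := Matrix.of w with hWdef
  have hWB : ∀ j a, (Bᵀ *ᵥ w j) a = (W * B) j a := by
    intro j a
    simp only [Matrix.mul_apply, Matrix.mulVec, dotProduct, Matrix.transpose_apply,
      hWdef, Matrix.of_apply]
    exact Finset.sum_congr rfl fun x _ => mul_comm _ _
  have hWWt : W * Wᵀ = Matrix.diagonal (fun j => if lam A j = 0 then (0:ℝ) else 1) := by
    ext i j
    have : (W * Wᵀ) i j = w i ⬝ᵥ w j := by
      simp [Matrix.mul_apply, dotProduct, hWdef]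
    rw [this, hw_dot i j, Matrix.diagonal_apply]
    by_cases hij : i = j
    · subst hij; simp
    · simp [hij]
  have hDW : Matrix.diagonal (fun j => if lam A j = 0 then (0:ℝ) else 1) * W = W := by
    ext j x
    rw [Matrix.diagonal_mul]
    by_cases hj : lam A j = 0
    · simp [hj, hWdef, hw]
    · simp [hj]
  set Pm : Matrix k k ℝ := Wᵀ * W with hPm
  have hPP : Pm * Pm = Pm := by
    rw [hPm, Matrix.mul_assoc, ← Matrix.mul_assoc W Wᵀ W, hWWt, hDW]
  have hPt : Pmᵀ = Pm := by
    rw [hPm, Matrix.transpose_mul, Matrix.transpose_transpose]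
  have hfrobWB : frobSq (W * B) ≤ frobSq B := by
    rw [frobSq_eq_trace, frobSq_eq_trace]
    have hId : ((1 - Pm) * B)ᵀ * ((1 - Pm) * B) = Bᵀ * B - (W * B)ᵀ * (W * B) := by
      have e : (1 - Pm) * ((1 - Pm) * B) = B - Pm * B := by
        rw [Matrix.sub_mul, Matrix.one_mul, Matrix.sub_mul, Matrix.one_mul,
          Matrix.mul_sub, ← Matrix.mul_assoc, hPP]
        abel
      have e2 : (W * B)ᵀ * (W * B) = Bᵀ * (Pm * B) := by
        rw [Matrix.transpose_mul, hPm, Matrix.mul_assoc, Matrix.mul_assoc]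
      rw [Matrix.transpose_mul (1 - Pm) B, Matrix.transpose_sub, Matrix.transpose_one, hPt,
        Matrix.mul_assoc, e, Matrix.mul_sub, e2]
    have h3 := trace_transpose_mul_self_nonneg ((1 - Pm) * B)
    rw [hId, Matrix.trace_sub] at h3
    linarith
  have hBpart : ∑ j, ∑ a, (Bᵀ *ᵥ w j) a ^ 2 ≤ frobSq B := by
    calc ∑ j, ∑ a, (Bᵀ *ᵥ w j) a ^ 2 = ∑ j, ∑ a, ((W * B) j a) ^ 2 := by
          simp_rw [hWB]
      _ = frobSq (W * B) := rfl
      _ ≤ frobSq B := hfrobWB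
  have hCpart : ∑ j, ∑ a, (C *ᵥ rv A j) a ^ 2 = frobSq C := sum_mulVec_rv_sq A C
  calc nuclearNorm A = ∑ j, Real.sqrt (lam A j) := nuclearNorm_eq A
    _ = ∑ j, (Bᵀ *ᵥ w j) ⬝ᵥ (C *ᵥ rv A j) := by
        refine Finset.sum_congr rfl fun j _ => ?_
        rw [← hsplit, hw_key]
    _ = ∑ x : n × p, (Bᵀ *ᵥ w x.1) x.2 * (C *ᵥ rv A x.1) x.2 := by
        rw [Fintype.sum_prod_type]
        rfl
    _ ≤ Real.sqrt (∑ x : n × p, (Bᵀ *ᵥ w x.1) x.2 ^ 2) *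
          Real.sqrt (∑ x : n × p, (C *ᵥ rv A x.1) x.2 ^ 2) :=
        sum_mul_le_sqrt_mul_sqrt _ _ _
    _ = Real.sqrt (∑ j, ∑ a, (Bᵀ *ᵥ w j) a ^ 2) *
          Real.sqrt (∑ j, ∑ a, (C *ᵥ rv A j) a ^ 2) := by
        rw [Fintype.sum_prod_type, Fintype.sum_prod_type]
    _ ≤ Real.sqrt (frobSq B) * Real.sqrt (frobSq C) := by
        rw [hCpart]
        exact mul_le_mul_of_nonneg_right (Real.sqrt_le_sqrt hBpart) (Real.sqrt_nonneg _)

end Key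

end NNAux


open NNAux

/-- Restatement of Theorem 1 in Mu et al.:
if `Π` preserves the squared Euclidean norm of every left singular vector of `Z`
up to a factor `1 ± ε`, and `k ≥ r = rank Z`, then
`√((1−ε)/r) ‖Z‖_s ≤ ‖ΠZ‖_s ≤ √(1+ε) ‖Z‖_s`. -/
theorem nuclearNorm_proj_bound
    (m n k r : ℕ) (Z : Matrix (Fin m) (Fin n) ℝ) (hrank : Z.rank = r)
    (ε : ℝ) (hε0 : 0 < ε) (hε1 : ε < 1)
    (P : Matrix (Fin k) (Fin m) ℝ) (hk : r ≤ k)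
    (hP : ∀ u : Fin m → ℝ, IsLeftSingularVector Z u →
      (∑ i, (P *ᵥ u) i ^ 2) ∈ Set.Icc (1 - ε) (1 + ε)) :
    Real.sqrt ((1 - ε) / r) * nuclearNorm Z ≤ nuclearNorm (P * Z) ∧
      nuclearNorm (P * Z) ≤ Real.sqrt (1 + ε) * nuclearNorm Z := by
  classical
  have hσsq : ∀ j, Real.sqrt (lam Z j) ^ 2 = lam Z j :=
    fun j => Real.sq_sqrt (lam_nonneg Z j)
  have hZv : ∀ j, ∑ x, (Z *ᵥ rv Z j) x ^ 2 = lam Z j := by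
    intro j
    have h := mulVec_rv_dot Z j j
    rw [if_pos rfl, mul_one] at h
    simpa [dotProduct, sq] using h
  have hvj : ∀ j, ∑ b, rv Z j b ^ 2 = 1 := by
    intro j
    have h := rv_dot Z j j
    rw [if_pos rfl] at h
    simpa [dotProduct, sq] using h
  have hσpos : ∀ j, lam Z j ≠ 0 → 0 < Real.sqrt (lam Z j) := by
    intro j hj
    exact Real.sqrt_pos.2 (lt_of_le_of_ne (lam_nonneg Z j) (Ne.symm hj))
  have hLSV : ∀ j, lam Z j ≠ 0 →
      IsLeftSingularVector Z ((Real.sqrt (lam Z j))⁻¹ • (Z *ᵥ rv Z j)) := by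
    intro j hj
    have hσne : Real.sqrt (lam Z j) ≠ 0 := ne_of_gt (hσpos j hj)
    constructor
    · have h1 : ∑ x, ((Real.sqrt (lam Z j))⁻¹ • (Z *ᵥ rv Z j)) x ^ 2
          = ((Real.sqrt (lam Z j))⁻¹) ^ 2 * ∑ x, (Z *ᵥ rv Z j) x ^ 2 := by
        simp [Pi.smul_apply, smul_eq_mul, mul_pow, Finset.mul_sum]
      rw [h1, hZv, ← hσsq j]
      rw [Real.sqrt_sq (Real.sqrt_nonneg _)]
      field_simp
    · refine ⟨lam Z j, hj, ?_⟩
      rw [Matrix.mulVec_smul]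
      have h2 : (Z * Zᵀ) *ᵥ (Z *ᵥ rv Z j) = lam Z j • (Z *ᵥ rv Z j) := by
        rw [Matrix.mulVec_mulVec, Matrix.mul_assoc, ← Matrix.mulVec_mulVec,
          eig_mulVec, Matrix.mulVec_smul]
      rw [h2, smul_comm]
  have hPZv : ∀ j, lam Z j ≠ 0 →
      ∑ x, (P *ᵥ (Z *ᵥ rv Z j)) x ^ 2
        = lam Z j * ∑ x, (P *ᵥ ((Real.sqrt (lam Z j))⁻¹ • (Z *ᵥ rv Z j))) x ^ 2 := by
    intro j hj
    have hσne : Real.sqrt (lam Z j) ≠ 0 := ne_of_gt (hσpos j hj)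
    have h1 : ∀ x, (P *ᵥ ((Real.sqrt (lam Z j))⁻¹ • (Z *ᵥ rv Z j))) x
        = (Real.sqrt (lam Z j))⁻¹ * (P *ᵥ (Z *ᵥ rv Z j)) x := by
      intro x
      rw [Matrix.mulVec_smul]
      rfl
    simp_rw [h1, mul_pow, ← Finset.mul_sum, ← mul_assoc]
    rw [← hσsq j]
    rw [Real.sqrt_sq (Real.sqrt_nonneg _)]
    field_simp
  have hPZv_up : ∀ j, ∑ x, (P *ᵥ (Z *ᵥ rv Z j)) x ^ 2 ≤ (1 + ε) * lam Z j := by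
    intro j
    by_cases hj : lam Z j = 0
    · rw [mulVec_rv_eq_zero Z hj, hj]
      simp
    · obtain ⟨-, ht2⟩ := hP _ (hLSV j hj)
      rw [hPZv j hj]
      calc lam Z j * ∑ x, (P *ᵥ ((Real.sqrt (lam Z j))⁻¹ • (Z *ᵥ rv Z j))) x ^ 2
          ≤ lam Z j * (1 + ε) := mul_le_mul_of_nonneg_left ht2 (lam_nonneg Z j)
        _ = (1 + ε) * lam Z j := mul_comm _ _
  have hPZv_lo : ∀ j, (1 - ε) * lam Z j ≤ ∑ x, (P *ᵥ (Z *ᵥ rv Z j)) x ^ 2 := by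
    intro j
    by_cases hj : lam Z j = 0
    · rw [mulVec_rv_eq_zero Z hj, hj]
      simp
    · obtain ⟨ht1, -⟩ := hP _ (hLSV j hj)
      rw [hPZv j hj, mul_comm]
      exact mul_le_mul_of_nonneg_left ht1 (lam_nonneg Z j)
  -- upper bound construction
  set Bm : Matrix (Fin k) (Fin n) ℝ :=
    Matrix.of (fun a j => (Real.sqrt (Real.sqrt (lam Z j)))⁻¹ * (P *ᵥ (Z *ᵥ rv Z j)) a)
    with hBm
  set Cm : Matrix (Fin n) (Fin n) ℝ :=
    Matrix.of (fun j b => Real.sqrt (Real.sqrt (lam Z j)) * rv Z j b) with hCm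
  have hBC : Bm * Cm = P * Z := by
    ext a b
    rw [Matrix.mul_apply]
    have h1 : ∀ j, Bm a j * Cm j b = ((P * Z) *ᵥ rv Z j) a * rv Z j b := by
      intro j
      simp only [hBm, hCm, Matrix.of_apply]
      rw [← Matrix.mulVec_mulVec]
      by_cases hj : lam Z j = 0
      · rw [mulVec_rv_eq_zero Z hj]
        simp
      · have hq : Real.sqrt (Real.sqrt (lam Z j)) ≠ 0 :=
          ne_of_gt (Real.sqrt_pos.2 (hσpos j hj))
        field_simp
    rw [Finset.sum_congr rfl fun j _ => h1 j]
    exact reconstruct Z (P * Z) a b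
  have hfrobC : frobSq Cm = nuclearNorm Z := by
    unfold frobSq
    rw [nuclearNorm_eq]
    refine Finset.sum_congr rfl fun j _ => ?_
    simp only [hCm, Matrix.of_apply, mul_pow]
    rw [← Finset.mul_sum, hvj, mul_one, Real.sq_sqrt (Real.sqrt_nonneg _)]
  have hfrobB : frobSq Bm ≤ (1 + ε) * nuclearNorm Z := by
    unfold frobSq
    rw [nuclearNorm_eq, Finset.mul_sum, Finset.sum_comm]
    refine Finset.sum_le_sum fun j _ => ?_
    simp only [hBm, Matrix.of_apply, mul_pow]
    rw [← Finset.mul_sum]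
    by_cases hj : lam Z j = 0
    · rw [mulVec_rv_eq_zero Z hj, hj]
      simp
    · have hσp := hσpos j hj
      have h2 : ((Real.sqrt (Real.sqrt (lam Z j)))⁻¹) ^ 2 = (Real.sqrt (lam Z j))⁻¹ := by
        rw [inv_pow, Real.sq_sqrt (Real.sqrt_nonneg _)]
      rw [h2]
      calc (Real.sqrt (lam Z j))⁻¹ * ∑ x, (P *ᵥ (Z *ᵥ rv Z j)) x ^ 2
          ≤ (Real.sqrt (lam Z j))⁻¹ * ((1 + ε) * lam Z j) :=
            mul_le_mul_of_nonneg_left (hPZv_up j) (inv_nonneg.2 (Real.sqrt_nonneg _))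
        _ = (1 + ε) * Real.sqrt (lam Z j) := by
            rw [← hσsq j]
            rw [Real.sqrt_sq (Real.sqrt_nonneg _)]
            field_simp
  have hS0 : 0 ≤ nuclearNorm Z := nuclearNorm_nonneg Z
  have hup : nuclearNorm (P * Z) ≤ Real.sqrt (1 + ε) * nuclearNorm Z := by
    have h1 := nuclearNorm_mul_le Bm Cm
    rw [hBC] at h1
    calc nuclearNorm (P * Z) ≤ Real.sqrt (frobSq Bm) * Real.sqrt (frobSq Cm) := h1
      _ ≤ Real.sqrt ((1 + ε) * nuclearNorm Z) * Real.sqrt (nuclearNorm Z) := by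
          rw [hfrobC]
          exact mul_le_mul_of_nonneg_right (Real.sqrt_le_sqrt hfrobB) (Real.sqrt_nonneg _)
      _ = Real.sqrt (1 + ε) * nuclearNorm Z := by
          rw [Real.sqrt_mul (by linarith : (0:ℝ) ≤ 1 + ε), mul_assoc,
            Real.mul_self_sqrt hS0]
  -- lower bound
  have hfrobPZ : (1 - ε) * frobSq Z ≤ frobSq (P * Z) := by
    rw [← sum_mulVec_rv_sq Z (P * Z), ← sum_lam_eq_frobSq Z, Finset.mul_sum]
    refine Finset.sum_le_sum fun j _ => ?_
    rw [show (P * Z) *ᵥ rv Z j = P *ᵥ (Z *ᵥ rv Z j) from (Matrix.mulVec_mulVec _ _ _).symm]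
    exact hPZv_lo j
  have hSr : nuclearNorm Z ≤ Real.sqrt r * Real.sqrt (frobSq Z) := by
    set s : Finset (Fin n) := Finset.univ.filter (fun j => lam Z j ≠ 0) with hs
    have hcard : (s.card : ℕ) = r := by
      have h1 : s.card = Fintype.card {j // lam Z j ≠ 0} := (Fintype.card_subtype _).symm
      rw [h1, card_lam_ne_zero Z, hrank]
    have hSsum : nuclearNorm Z = ∑ j ∈ s, Real.sqrt (lam Z j) := by
      rw [nuclearNorm_eq]
      refine (Finset.sum_subset (Finset.filter_subset _ _) ?_).symm
      intro j _ hj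
      simp only [hs, Finset.mem_filter, Finset.mem_univ, true_and, not_not] at hj
      rw [hj, Real.sqrt_zero]
    have hCS : (∑ j ∈ s, Real.sqrt (lam Z j)) ^ 2 ≤ (s.card : ℝ) * ∑ j ∈ s, lam Z j := by
      have h := sq_sum_le_card_mul_sum_sq (s := s) (f := fun j => Real.sqrt (lam Z j))
      calc (∑ j ∈ s, Real.sqrt (lam Z j)) ^ 2
          ≤ (s.card : ℝ) * ∑ j ∈ s, Real.sqrt (lam Z j) ^ 2 := h
        _ = (s.card : ℝ) * ∑ j ∈ s, lam Z j := by
            rw [Finset.sum_congr rfl fun j _ => hσsq j]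
    have hsum_le : ∑ j ∈ s, lam Z j ≤ frobSq Z := by
      rw [← sum_lam_eq_frobSq Z]
      exact Finset.sum_le_sum_of_subset_of_nonneg (Finset.filter_subset _ _)
        (fun j _ _ => lam_nonneg Z j)
    have hSsq : (nuclearNorm Z) ^ 2 ≤ (r : ℝ) * frobSq Z := by
      rw [hSsum]
      calc (∑ j ∈ s, Real.sqrt (lam Z j)) ^ 2 ≤ (s.card : ℝ) * ∑ j ∈ s, lam Z j := hCS
        _ ≤ (r : ℝ) * frobSq Z := by
            rw [hcard]
            exact mul_le_mul_of_nonneg_left hsum_le (Nat.cast_nonneg r)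
    calc nuclearNorm Z = Real.sqrt ((nuclearNorm Z) ^ 2) := (Real.sqrt_sq hS0).symm
      _ ≤ Real.sqrt ((r : ℝ) * frobSq Z) := Real.sqrt_le_sqrt hSsq
      _ = Real.sqrt r * Real.sqrt (frobSq Z) := Real.sqrt_mul (Nat.cast_nonneg r) _
  have hlow : Real.sqrt ((1 - ε) / r) * nuclearNorm Z ≤ nuclearNorm (P * Z) := by
    have hf := sqrt_frobSq_le_nuclearNorm (P * Z)
    have h2 : Real.sqrt ((1 - ε) * frobSq Z) ≤ nuclearNorm (P * Z) :=
      le_trans (Real.sqrt_le_sqrt hfrobPZ) hf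
    by_cases hr : (r : ℝ) = 0
    · have h3 : nuclearNorm Z ≤ 0 := by
        have := hSr
        rw [hr, Real.sqrt_zero, zero_mul] at this
        exact this
      have hSz : nuclearNorm Z = 0 := le_antisymm h3 hS0
      rw [hSz, mul_zero]
      exact nuclearNorm_nonneg _
    · have hrpos : (0 : ℝ) < r := lt_of_le_of_ne (Nat.cast_nonneg r) (Ne.symm hr)
      have hε' : (0 : ℝ) ≤ (1 - ε) / r := div_nonneg (by linarith) (le_of_lt hrpos)
      calc Real.sqrt ((1 - ε) / r) * nuclearNorm Z
          ≤ Real.sqrt ((1 - ε) / r) * (Real.sqrt r * Real.sqrt (frobSq Z)) :=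
            mul_le_mul_of_nonneg_left hSr (Real.sqrt_nonneg _)
        _ = Real.sqrt ((1 - ε) / r * r) * Real.sqrt (frobSq Z) := by
            rw [Real.sqrt_mul hε' (r : ℝ), mul_assoc]
        _ = Real.sqrt (1 - ε) * Real.sqrt (frobSq Z) := by rw [div_mul_cancel₀ _ hr]
        _ = Real.sqrt ((1 - ε) * frobSq Z) := (Real.sqrt_mul (by linarith) _).symm
        _ ≤ nuclearNorm (P * Z) := h2
  exact ⟨hlow, hup⟩
end
end

section
/- Let X_1, …, X_k be independent standard Gaussian random variables and Z = Σ_{i=1}^k X_i² (a chi-squared random variable with k degrees of freedom). Then for every ε ∈ (0,1), P( Z ∉ [k(1−ε), k(1+ε)] ) ≤ 2 exp(−k(ε² − ε³)/4). -/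
open scoped BigOperators ENNReal
open MeasureTheory ProbabilityTheory

noncomputable section

lemma cubic_le_exp_neg {z : ℝ} (hz : 0 ≤ z) :
    1 - z + z ^ 2 / 2 - z ^ 3 / 6 ≤ Real.exp (-z) := by
  have h2 : ∀ x : ℝ, 0 ≤ x → Real.exp (-x) ≤ 1 - x + x ^ 2 / 2 := by
    intro x hx
    have h := Real.quadratic_le_exp_of_nonneg hx
    have hxp : (0:ℝ) < 1 + x + x ^ 2 / 2 := by positivity
    have h1 : Real.exp (-x) ≤ (1 + x + x ^ 2 / 2)⁻¹ := by
      rw [Real.exp_neg]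
      exact inv_anti₀ hxp h
    refine h1.trans ?_
    rw [inv_eq_one_div, div_le_iff₀ hxp]
    nlinarith [sq_nonneg x, sq_nonneg (x^2)]
  set f : ℝ → ℝ := fun z => Real.exp (-z) - (1 - z + z ^ 2 / 2 - z ^ 3 / 6) with hf
  have hderiv : ∀ x : ℝ, HasDerivAt f (-Real.exp (-x) - (-1 + x - x ^ 2 / 2)) x := by
    intro x
    have h1 : HasDerivAt (fun y : ℝ => Real.exp (-y)) (-Real.exp (-x)) x := by
      simpa using (hasDerivAt_neg x).exp
    have h2 : HasDerivAt (fun y : ℝ => 1 - y + y ^ 2 / 2 - y ^ 3 / 6)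
        (-1 + x - x ^ 2 / 2) x := by
      have : HasDerivAt (fun y : ℝ => 1 - y + y ^ 2 / 2 - y ^ 3 / 6) _ x := (((hasDerivAt_const x (1:ℝ)).sub (hasDerivAt_id x)).add
        (((hasDerivAt_pow 2 x)).div_const 2)).sub ((hasDerivAt_pow 3 x).div_const 6)
      convert this using 1
      ring
    exact h1.sub h2
  have hmono : MonotoneOn f (Set.Ici (0:ℝ)) := by
    refine monotoneOn_of_deriv_nonneg (convex_Ici 0) ?_ ?_ ?_
    · exact fun x _ => ((hderiv x).differentiableAt).continuousAt.continuousWithinAt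
    · exact fun x _ => ((hderiv x).differentiableAt).differentiableWithinAt
    · intro x hx
      rw [interior_Ici] at hx
      rw [(hderiv x).deriv]
      have := h2 x hx.le
      linarith
  have h0 : f 0 ≤ f z := hmono Set.self_mem_Ici hz hz
  simp only [hf] at h0
  norm_num at h0
  linarith

lemma gauss_pdf_mul_eq {t : ℝ} :
    (fun x : ℝ => gaussianPDFReal 0 1 x * Real.exp (t * x ^ 2)) =
      fun x : ℝ => (Real.sqrt (2 * Real.pi))⁻¹ * Real.exp (-(1/2 - t) * x ^ 2) := by
  funext x
  simp only [gaussianPDFReal, NNReal.coe_one, mul_one, sub_zero]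
  rw [mul_assoc, ← Real.exp_add]
  congr 1
  ring

lemma gauss_exp_sq_integrable {t : ℝ} (ht : t < 1/2) :
    Integrable (fun x => Real.exp (t * x ^ 2)) (gaussianReal 0 1) := by
  rw [gaussianReal_of_var_ne_zero _ one_ne_zero, gaussianPDF_def]
  have hmeas : Measurable fun x => (gaussianPDFReal 0 1 x).toNNReal :=
    (measurable_gaussianPDFReal 0 1).real_toNNReal
  have h1 : (fun x => ENNReal.ofReal (gaussianPDFReal 0 1 x)) =
      fun x => ((gaussianPDFReal 0 1 x).toNNReal : ℝ≥0∞) := rfl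
  rw [h1, integrable_withDensity_iff_integrable_smul hmeas]
  have heq : (fun x => ((gaussianPDFReal 0 1 x).toNNReal : NNReal) • Real.exp (t * x ^ 2)) =
      fun x : ℝ => (Real.sqrt (2 * Real.pi))⁻¹ * Real.exp (-(1/2 - t) * x ^ 2) := by
    rw [← gauss_pdf_mul_eq]
    funext x
    rw [NNReal.smul_def, smul_eq_mul, Real.coe_toNNReal _ (gaussianPDFReal_nonneg 0 1 x)]
  rw [heq]
  exact (integrable_exp_neg_mul_sq (by linarith)).const_mul _

lemma gauss_exp_sq_integral {t : ℝ} (ht : t < 1/2) :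
    ∫ x, Real.exp (t * x ^ 2) ∂(gaussianReal 0 1) = (Real.sqrt (1 - 2 * t))⁻¹ := by
  rw [gaussianReal_of_var_ne_zero _ one_ne_zero, gaussianPDF_def]
  have hmeas : Measurable fun x => (gaussianPDFReal 0 1 x).toNNReal :=
    (measurable_gaussianPDFReal 0 1).real_toNNReal
  have h1 : (fun x => ENNReal.ofReal (gaussianPDFReal 0 1 x)) =
      fun x => ((gaussianPDFReal 0 1 x).toNNReal : ℝ≥0∞) := rfl
  rw [h1, integral_withDensity_eq_integral_smul hmeas]
  have heq : (fun x => ((gaussianPDFReal 0 1 x).toNNReal : NNReal) • Real.exp (t * x ^ 2)) =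
      fun x : ℝ => (Real.sqrt (2 * Real.pi))⁻¹ * Real.exp (-(1/2 - t) * x ^ 2) := by
    rw [← gauss_pdf_mul_eq]
    funext x
    rw [NNReal.smul_def, smul_eq_mul, Real.coe_toNNReal _ (gaussianPDFReal_nonneg 0 1 x)]
  rw [heq, integral_const_mul, integral_gaussian]
  have h2 : (0:ℝ) < 1 - 2 * t := by linarith
  have h3 : Real.pi / (1/2 - t) = 2 * Real.pi * (1 - 2 * t)⁻¹ := by
    field_simp
  rw [h3, Real.sqrt_mul (by positivity : (0:ℝ) ≤ 2 * Real.pi),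
    Real.sqrt_mul (by positivity : (0:ℝ) ≤ 2), Real.sqrt_inv]
  have hs2 : (0:ℝ) < Real.sqrt 2 := by positivity
  have hsp : (0:ℝ) < Real.sqrt Real.pi := Real.sqrt_pos.mpr Real.pi_pos
  field_simp

/-- chi-squared concentration: if `X_1, …, X_k` are i.i.d. standard
Gaussian random variables and `Z = Σ X_i²`, then for every `ε ∈ (0,1)`,
`P(Z ∉ [k(1−ε), k(1+ε)]) ≤ 2 exp(−k(ε² − ε³)/4)`. -/
theorem chi_squared_concentration
    (k : ℕ) (Ω : Type*) (mΩ : MeasurableSpace Ω) (P : Measure Ω)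
    (hP : IsProbabilityMeasure P)
    (X : Fin k → Ω → ℝ) (hmeas : ∀ i, Measurable (X i))
    (hindep : iIndepFun X P)
    (hdist : ∀ i, Measure.map (X i) P = gaussianReal 0 1)
    (ε : ℝ) (hε0 : 0 < ε) (hε1 : ε < 1) :
    P {ω | (∑ i, X i ω ^ 2) ∉ Set.Icc ((k : ℝ) * (1 - ε)) ((k : ℝ) * (1 + ε))} ≤
      ENNReal.ofReal (2 * Real.exp (-(k : ℝ) * (ε ^ 2 - ε ^ 3) / 4)) := by
  set Y : Fin k → Ω → ℝ := fun i ω => X i ω ^ 2 with hYdef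
  have hY : ∀ i, Measurable (Y i) := fun i => (hmeas i).pow_const 2
  have hindepY : iIndepFun Y P :=
    hindep.comp (fun _ x => x ^ 2) (fun _ => measurable_id.pow_const 2)
  have hsm : ∀ t : ℝ, AEStronglyMeasurable (fun x : ℝ => Real.exp (t * x ^ 2))
      (gaussianReal 0 1) := fun t =>
    (Real.continuous_exp.comp (by continuity)).aestronglyMeasurable
  have hint : ∀ (t : ℝ), t < 1/2 → ∀ i, Integrable (fun ω => Real.exp (t * Y i ω)) P := by
    intro t ht i
    have h := gauss_exp_sq_integrable ht
    rw [← hdist i] at h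
    have := (integrable_map_measure (by rw [hdist i]; exact hsm t)
      (hmeas i).aemeasurable).mp h
    simpa [Function.comp_def, hYdef] using this
  have hmgf : ∀ (t : ℝ), t < 1/2 → ∀ i, mgf (Y i) P t = (Real.sqrt (1 - 2 * t))⁻¹ := by
    intro t ht i
    rw [mgf, ← gauss_exp_sq_integral ht, ← hdist i,
      integral_map (hmeas i).aemeasurable (by rw [hdist i]; exact hsm t)]
  have hintsum : ∀ (t : ℝ), t < 1/2 →
      Integrable (fun ω => Real.exp (t * (∑ i, Y i) ω)) P := fun t ht =>
    hindepY.integrable_exp_mul_sum hY (fun i _ => hint t ht i)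
  have hmgfsum : ∀ (t : ℝ), t < 1/2 →
      mgf (∑ i, Y i) P t = ((Real.sqrt (1 - 2 * t))⁻¹) ^ k := by
    intro t ht
    rw [hindepY.mgf_sum hY Finset.univ]
    simp [hmgf t ht]
  have h1e : (0:ℝ) < 1 + ε := by linarith
  have h1e' : (0:ℝ) < 1 - ε := by linarith
  -- upper tail
  set tp : ℝ := ε / (2 * (1 + ε)) with htpdef
  have htp0 : 0 ≤ tp := by positivity
  have htp2 : tp < 1/2 := by
    rw [htpdef, div_lt_iff₀ (by positivity)]
    nlinarith
  have htp1 : 1 - 2 * tp = (1 + ε)⁻¹ := by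
    rw [htpdef, inv_eq_one_div, eq_div_iff (ne_of_gt h1e)]
    field_simp
    ring
  have hup := measure_ge_le_exp_mul_mgf (μ := P) ((k:ℝ) * (1 + ε)) htp0 (hintsum tp htp2)
  rw [hmgfsum tp htp2, htp1, Real.sqrt_inv, inv_inv] at hup
  have huptp : tp * (1 + ε) = ε / 2 := by
    rw [htpdef]; field_simp
  have hupbound : Real.exp (-tp * ((k:ℝ) * (1 + ε))) * Real.sqrt (1 + ε) ^ k ≤
      Real.exp (-(k:ℝ) * (ε ^ 2 - ε ^ 3) / 4) := by
    have hbase : Real.exp (-(ε/2)) * Real.sqrt (1 + ε) ≤ Real.exp (-(ε^2 - ε^3)/4) := by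
      have key : 1 + ε ≤ Real.exp (ε - ε^2/2 + ε^3/2) := by
        have h := Real.quadratic_le_exp_of_nonneg (x := ε - ε^2/2 + ε^3/2) (by nlinarith)
        nlinarith [h, sq_nonneg ε, pow_pos hε0 3, sq_nonneg (1 - ε)]
      have key' : 1 + ε ≤ Real.exp (ε/2 - (ε^2 - ε^3)/4) * Real.exp (ε/2 - (ε^2 - ε^3)/4) := by
        rw [← Real.exp_add]; convert key using 2; ring
      have h1 : Real.sqrt (1 + ε) ≤ Real.exp (ε/2 - (ε^2 - ε^3)/4) :=
        (Real.sqrt_le_sqrt key').trans_eq (Real.sqrt_mul_self (Real.exp_pos _).le)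
      calc Real.exp (-(ε/2)) * Real.sqrt (1 + ε)
          ≤ Real.exp (-(ε/2)) * Real.exp (ε/2 - (ε^2 - ε^3)/4) :=
            mul_le_mul_of_nonneg_left h1 (Real.exp_pos _).le
        _ = Real.exp (-(ε^2 - ε^3)/4) := by rw [← Real.exp_add]; ring_nf
    calc Real.exp (-tp * ((k:ℝ) * (1 + ε))) * Real.sqrt (1 + ε) ^ k
        = (Real.exp (-(ε/2)) * Real.sqrt (1 + ε)) ^ k := by
          rw [mul_pow, ← Real.exp_nat_mul]
          congr 2
          linear_combination (-(k:ℝ)) * huptp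
      _ ≤ (Real.exp (-(ε^2 - ε^3)/4)) ^ k := by
          apply pow_le_pow_left₀ (by positivity) hbase
      _ = Real.exp (-(k:ℝ) * (ε ^ 2 - ε ^ 3) / 4) := by
          rw [← Real.exp_nat_mul]; congr 1; ring
  -- lower tail
  set tm : ℝ := -(ε / (2 * (1 - ε))) with htmdef
  have htm0 : tm ≤ 0 := by
    rw [htmdef]; simp; positivity
  have htm2 : tm < 1/2 := lt_of_le_of_lt htm0 (by norm_num)
  have htm1 : 1 - 2 * tm = (1 - ε)⁻¹ := by
    rw [htmdef, inv_eq_one_div, eq_div_iff (ne_of_gt h1e')]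
    field_simp
    ring_nf
  have hlow := measure_le_le_exp_mul_mgf (μ := P) ((k:ℝ) * (1 - ε)) htm0 (hintsum tm htm2)
  rw [hmgfsum tm htm2, htm1, Real.sqrt_inv, inv_inv] at hlow
  have hlowtm : tm * (1 - ε) = -(ε / 2) := by
    rw [htmdef]; field_simp
  have hlowbound : Real.exp (-tm * ((k:ℝ) * (1 - ε))) * Real.sqrt (1 - ε) ^ k ≤
      Real.exp (-(k:ℝ) * (ε ^ 2 - ε ^ 3) / 4) := by
    have hbase : Real.exp (ε/2) * Real.sqrt (1 - ε) ≤ Real.exp (-(ε^2 - ε^3)/4) := by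
      have hz : (0:ℝ) ≤ ε + ε^2/2 - ε^3/2 := by nlinarith
      have hc := cubic_le_exp_neg hz
      have key : 1 - ε ≤ Real.exp (-(ε + ε^2/2 - ε^3/2)) := by
        refine le_trans ?_ hc
        nlinarith [pow_pos hε0 3, sq_nonneg ε, sq_nonneg (1-ε), pow_pos hε0 2,
          mul_pos hε0 (sub_pos.2 hε1), sq_nonneg (ε*(1-ε)), sq_nonneg (ε^2*(1-ε)),
          sq_nonneg (ε^3*(1-ε)), pow_pos hε0 4, pow_pos hε0 5]
      have key' : 1 - ε ≤
          Real.exp (-(ε/2) - (ε^2 - ε^3)/4) * Real.exp (-(ε/2) - (ε^2 - ε^3)/4) := by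
        rw [← Real.exp_add]; convert key using 2; ring
      have h1 : Real.sqrt (1 - ε) ≤ Real.exp (-(ε/2) - (ε^2 - ε^3)/4) :=
        (Real.sqrt_le_sqrt key').trans_eq (Real.sqrt_mul_self (Real.exp_pos _).le)
      calc Real.exp (ε/2) * Real.sqrt (1 - ε)
          ≤ Real.exp (ε/2) * Real.exp (-(ε/2) - (ε^2 - ε^3)/4) :=
            mul_le_mul_of_nonneg_left h1 (Real.exp_pos _).le
        _ = Real.exp (-(ε^2 - ε^3)/4) := by rw [← Real.exp_add]; ring_nf
    calc Real.exp (-tm * ((k:ℝ) * (1 - ε))) * Real.sqrt (1 - ε) ^ k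
        = (Real.exp (ε/2) * Real.sqrt (1 - ε)) ^ k := by
          rw [mul_pow, ← Real.exp_nat_mul]
          congr 2
          linear_combination (-(k:ℝ)) * hlowtm
      _ ≤ (Real.exp (-(ε^2 - ε^3)/4)) ^ k := by
          apply pow_le_pow_left₀ (by positivity) hbase
      _ = Real.exp (-(k:ℝ) * (ε ^ 2 - ε ^ 3) / 4) := by
          rw [← Real.exp_nat_mul]; congr 1; ring
  -- assemble
  have hE : (0:ℝ) ≤ Real.exp (-(k:ℝ) * (ε ^ 2 - ε ^ 3) / 4) := (Real.exp_pos _).le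
  have hsub : {ω | (∑ i, X i ω ^ 2) ∉ Set.Icc ((k : ℝ) * (1 - ε)) ((k : ℝ) * (1 + ε))} ⊆
      {ω | (∑ i, Y i) ω ≤ (k:ℝ) * (1 - ε)} ∪ {ω | (k:ℝ) * (1 + ε) ≤ (∑ i, Y i) ω} := by
    intro ω hω
    simp only [Set.mem_setOf_eq, Set.mem_Icc, not_and_or, not_le] at hω
    have hYω : (∑ i, Y i) ω = ∑ i, X i ω ^ 2 := by simp [hYdef]
    rcases hω with h | h
    · exact Or.inl (by simp only [Set.mem_setOf_eq, hYω]; linarith)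
    · exact Or.inr (by simp only [Set.mem_setOf_eq, hYω]; linarith)
  have hA : P {ω | (∑ i, Y i) ω ≤ (k:ℝ) * (1 - ε)} ≤
      ENNReal.ofReal (Real.exp (-(k:ℝ) * (ε ^ 2 - ε ^ 3) / 4)) := by
    rw [← ENNReal.ofReal_toReal (measure_ne_top P _)]
    exact ENNReal.ofReal_le_ofReal (hlow.trans hlowbound)
  have hB : P {ω | (k:ℝ) * (1 + ε) ≤ (∑ i, Y i) ω} ≤
      ENNReal.ofReal (Real.exp (-(k:ℝ) * (ε ^ 2 - ε ^ 3) / 4)) := by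
    rw [← ENNReal.ofReal_toReal (measure_ne_top P _)]
    exact ENNReal.ofReal_le_ofReal (hup.trans hupbound)
  calc P {ω | (∑ i, X i ω ^ 2) ∉ Set.Icc ((k : ℝ) * (1 - ε)) ((k : ℝ) * (1 + ε))}
      ≤ P ({ω | (∑ i, Y i) ω ≤ (k:ℝ) * (1 - ε)} ∪
          {ω | (k:ℝ) * (1 + ε) ≤ (∑ i, Y i) ω}) := measure_mono hsub
    _ ≤ P {ω | (∑ i, Y i) ω ≤ (k:ℝ) * (1 - ε)} +
        P {ω | (k:ℝ) * (1 + ε) ≤ (∑ i, Y i) ω} := measure_union_le _ _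
    _ ≤ ENNReal.ofReal (Real.exp (-(k:ℝ) * (ε ^ 2 - ε ^ 3) / 4)) +
        ENNReal.ofReal (Real.exp (-(k:ℝ) * (ε ^ 2 - ε ^ 3) / 4)) := add_le_add hA hB
    _ = ENNReal.ofReal (2 * Real.exp (-(k : ℝ) * (ε ^ 2 - ε ^ 3) / 4)) := by
        rw [← ENNReal.ofReal_add hE hE, two_mul]
end
end
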